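/- arXiv:2602.04080 — 3 statements merged into one kernel-verified Lean document; each statement's English description precedes it below -/
import Mathlib

section
/- Let U be a u-dimensional F_{q^2}-subspace of F_{q^2}^n. Then the F_q-dimension of the space of Hermitian n×n matrices over F_{q^2} whose column space is contained in U equals u^2. -/
open Matrix Module

/-- The `K`-subspace of matrices with column space contained in `U`. -/
def colRes {K : Type*} [Field K] {n : ℕ} (U : Submodule K (Fin n → K)) :
    Submodule K (Matrix (Fin n) (Fin n) K) where
  carrier := {M | ∀ v : Fin n → K, M.mulVec v ∈ U}
  add_mem' := by
    intro A B hA hB v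
    rw [Matrix.add_mulVec]
    exact U.add_mem (hA v) (hB v)
  zero_mem' := by
    intro v
    rw [Matrix.zero_mulVec]
    exact U.zero_mem
  smul_mem' := by
    intro c A hA v
    rw [Matrix.smul_mulVec]
    exact U.smul_mem c (hA v)

/-- The `F`-subspace of `σ`-Hermitian `n×n` matrices over `K`, where `σ` fixes
the subfield `F` pointwise. -/
def herSub (F : Type*) {K : Type*} [Field F] [Field K] [Algebra F K] (n : ℕ)
    (σ : K ≃+* K)
    (hfix : ∀ c : F, σ (algebraMap F K c) = algebraMap F K c) :
    Submodule F (Matrix (Fin n) (Fin n) K) where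
  carrier := {M | (M.map σ)ᵀ = M}
  add_mem' := by
    intro A B hA hB
    simp only [Set.mem_setOf_eq] at *
    ext i j
    have hA' := congrFun (congrFun hA i) j
    have hB' := congrFun (congrFun hB i) j
    simp only [Matrix.transpose_apply, Matrix.map_apply] at hA' hB' ⊢
    simp [Matrix.add_apply, map_add, hA', hB']
  zero_mem' := by
    simp only [Set.mem_setOf_eq]
    ext i j
    simp
  smul_mem' := by
    intro c A hA
    simp only [Set.mem_setOf_eq] at *
    ext i j
    have hA' := congrFun (congrFun hA i) j
    simp only [Matrix.transpose_apply, Matrix.map_apply] at hA' ⊢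
    rw [Matrix.smul_apply, Matrix.smul_apply, Algebra.smul_def, Algebra.smul_def,
      _root_.map_mul, hfix, hA']

section Aux

variable {F K : Type*} [Field F] [Field K] [Algebra F K] [Fintype F] [Fintype K]

lemma mem_herSub {n : ℕ} (σ : K ≃+* K)
    (hfix : ∀ c : F, σ (algebraMap F K c) = algebraMap F K c)
    (M : Matrix (Fin n) (Fin n) K) : M ∈ herSub F n σ hfix ↔ (M.map ⇑σ)ᵀ = M := Iff.rfl

lemma mem_colRes {n : ℕ} (U : Submodule K (Fin n → K)) (M : Matrix (Fin n) (Fin n) K) :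
    M ∈ colRes U ↔ ∀ v, M.mulVec v ∈ U := Iff.rfl

lemma sigma_invol {q : ℕ} (hK : Fintype.card K = q ^ 2) (σ : K ≃+* K)
    (hσ : ∀ x : K, σ x = x ^ q) (x : K) : σ (σ x) = x := by
  rw [hσ, hσ, ← pow_mul, ← sq, ← hK, FiniteField.pow_card]

/-- The fixed subfield of `σ`, as an `F`-submodule of `K`. -/
def fixSub (F : Type*) {K : Type*} [Field F] [Field K] [Algebra F K] (σ : K ≃+* K)
    (hfix : ∀ c : F, σ (algebraMap F K c) = algebraMap F K c) : Submodule F K where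
  carrier := {x | σ x = x}
  add_mem' := by
    intro a b ha hb
    simp only [Set.mem_setOf_eq] at *
    rw [map_add, ha, hb]
  zero_mem' := by simp
  smul_mem' := by
    intro c x hx
    simp only [Set.mem_setOf_eq] at *
    rw [Algebra.smul_def, σ.map_mul, hfix, hx]

lemma mem_fixSub (σ : K ≃+* K) (hfix : ∀ c : F, σ (algebraMap F K c) = algebraMap F K c)
    (x : K) : x ∈ fixSub F σ hfix ↔ σ x = x := Iff.rfl

lemma finrank_FK {q : ℕ} (hF : Fintype.card F = q) (hK : Fintype.card K = q ^ 2) :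
    finrank F K = 2 := by
  have hq : 2 ≤ q := hF ▸ Fintype.one_lt_card
  have h := Module.card_fintype (Module.finBasis F K)
  rw [Fintype.card_fin, hF, hK] at h
  exact (Nat.pow_right_injective hq h).symm

lemma sigma_ne_id {q : ℕ} (hF : Fintype.card F = q) (hK : Fintype.card K = q ^ 2)
    (σ : K ≃+* K) (hσ : ∀ x : K, σ x = x ^ q) : ¬ ∀ x : K, σ x = x := by
  intro hall
  classical
  have hq : 2 ≤ q := hF ▸ Fintype.one_lt_card
  obtain ⟨g, hg⟩ := IsCyclic.exists_generator (α := Kˣ)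
  have hord : orderOf g = q ^ 2 - 1 := by
    rw [orderOf_eq_card_of_forall_mem_zpowers hg, Nat.card_eq_fintype_card,
      Fintype.card_units, hK]
  have hgq : g ^ q = g := by
    apply Units.ext
    rw [Units.val_pow_eq_pow_val, ← hσ, hall]
  have hpow : g ^ (q - 1) = 1 := by
    have : g ^ (q - 1) * g = g := by
      rw [← pow_succ, Nat.sub_add_cancel (by omega), hgq]
    exact mul_right_cancel (this.trans (one_mul g).symm)
  have hdvd : orderOf g ∣ q - 1 := orderOf_dvd_of_pow_eq_one hpow
  rw [hord] at hdvd
  have hle : q ^ 2 - 1 ≤ q - 1 := Nat.le_of_dvd (by omega) hdvd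
  have : 2 * q ≤ q * q := Nat.mul_le_mul_right q hq
  have : q ^ 2 = q * q := sq q
  omega

lemma finrank_fixSub {q : ℕ} (hF : Fintype.card F = q) (hK : Fintype.card K = q ^ 2)
    (σ : K ≃+* K) (hσ : ∀ x : K, σ x = x ^ q)
    (hfix : ∀ c : F, σ (algebraMap F K c) = algebraMap F K c) :
    finrank F (fixSub F σ hfix) = 1 := by
  have h2 : finrank F K = 2 := finrank_FK hF hK
  have hle : finrank F (fixSub F σ hfix) ≤ 2 := h2 ▸ Submodule.finrank_le _
  have hpos : 0 < finrank F (fixSub F σ hfix) := by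
    have : Nontrivial (fixSub F σ hfix) := by
      refine nontrivial_of_ne ⟨1, by simp [mem_fixSub]⟩ 0 ?_
      intro h
      have := congrArg Subtype.val h
      simp at this
    exact finrank_pos
  have hne : finrank F (fixSub F σ hfix) ≠ 2 := by
    intro h
    have htop : fixSub F σ hfix = ⊤ := Submodule.eq_top_of_finrank_eq (h.trans h2.symm)
    exact sigma_ne_id hF hK σ hσ fun x =>
      (mem_fixSub σ hfix x).mp (htop ▸ Submodule.mem_top)
  omega

end Aux

section StarM

variable {F K : Type*} [Field F] [Field K] [Algebra F K] [Fintype F] [Fintype K]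

/-- conjugate transpose w.r.t. `σ`. -/
def starM {K : Type*} [Field K] (σ : K ≃+* K) {m p : Type*} (M : Matrix m p K) :
    Matrix p m K := (M.map ⇑σ)ᵀ

lemma starM_apply {K : Type*} [Field K] (σ : K ≃+* K) {m p : Type*} (M : Matrix m p K)
    (i : p) (j : m) : starM σ M i j = σ (M j i) := rfl

omit [Fintype F] [Fintype K] in
lemma starM_mul (σ : K ≃+* K) {m p r : Type*} [Fintype p]
    (A : Matrix m p K) (B : Matrix p r K) :
    starM σ (A * B) = starM σ B * starM σ A := by
  ext i j
  simp only [starM_apply, Matrix.mul_apply, map_sum, σ.map_mul]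
  exact Finset.sum_congr rfl fun k _ => mul_comm _ _

omit [Fintype F] in
lemma starM_invol {q : ℕ} (hK : Fintype.card K = q ^ 2) (σ : K ≃+* K)
    (hσ : ∀ x : K, σ x = x ^ q) {m p : Type*} (M : Matrix m p K) :
    starM σ (starM σ M) = M := by
  ext i j
  simp [starM_apply, sigma_invol hK σ hσ]

omit [Fintype F] [Fintype K] in
lemma starM_zero (σ : K ≃+* K) {m p : Type*} : starM σ (0 : Matrix m p K) = 0 := by
  ext i j
  simp [starM_apply]

omit [Fintype F] [Fintype K] in
lemma mem_herSub' {n : ℕ} (σ : K ≃+* K)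
    (hfix : ∀ c : F, σ (algebraMap F K c) = algebraMap F K c)
    (M : Matrix (Fin n) (Fin n) K) : M ∈ herSub F n σ hfix ↔ starM σ M = M := Iff.rfl

end StarM

section Full

variable {F K : Type*} [Field F] [Field K] [Algebra F K] [Fintype F] [Fintype K]
variable {q : ℕ} (hF : Fintype.card F = q) (hK : Fintype.card K = q ^ 2)
variable (σ : K ≃+* K) (hσ : ∀ x : K, σ x = x ^ q)
variable (hfix : ∀ c : F, σ (algebraMap F K c) = algebraMap F K c)

variable (u : ℕ)

/-- Strictly lower triangular index set. -/
abbrev LowIdx (u : ℕ) := {p : Fin u × Fin u // p.2 < p.1}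

/-- parametrization of hermitian matrices by diagonal (in the fixed field) and
strictly lower entries. -/
def herParam : ((Fin u → fixSub F σ hfix) × (LowIdx u → K)) →ₗ[F]
    Matrix (Fin u) (Fin u) K where
  toFun x := Matrix.of fun i j =>
    if h : j < i then x.2 ⟨(i, j), h⟩
    else if h' : i < j then σ (x.2 ⟨(j, i), h'⟩)
    else (x.1 i : K)
  map_add' x y := by
    ext i j
    by_cases h : j < i
    · simp [h]
    · by_cases h' : i < j <;> simp [h, h', map_add]
  map_smul' c x := by
    ext i j
    by_cases h : j < i
    · simp [h]
    · by_cases h' : i < j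
      · simp only [Matrix.of_apply, h, h', dif_neg, dif_pos, not_false_iff,
          Prod.smul_snd, Pi.smul_apply, RingHom.id_apply, Matrix.smul_apply]
        rw [Algebra.smul_def, σ.map_mul, hfix, Algebra.smul_def]
      · simp [h, h', Algebra.smul_def]

lemma herParam_inj : Function.Injective (herParam σ hfix u) := by
  intro x y hxy
  obtain ⟨d1, l1⟩ := x
  obtain ⟨d2, l2⟩ := y
  have h : ∀ i j, herParam σ hfix u (d1, l1) i j = herParam σ hfix u (d2, l2) i j :=
    fun i j => congrFun (congrFun hxy i) j
  have hd : d1 = d2 := by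
    funext i
    apply Subtype.ext
    have := h i i
    simpa [herParam, lt_irrefl] using this
  have hl : l1 = l2 := by
    funext p
    obtain ⟨⟨i, j⟩, hp⟩ := p
    have := h i j
    simpa [herParam, hp] using this
  rw [hd, hl]

include hK hσ in
lemma herParam_range : LinearMap.range (herParam σ hfix u) = herSub F u σ hfix := by
  ext M
  constructor
  · rintro ⟨⟨d, l⟩, rfl⟩
    rw [mem_herSub]
    ext i j
    simp only [Matrix.transpose_apply, Matrix.map_apply]
    rcases lt_trichotomy i j with h | h | h
    · simp [herParam, h, h.not_gt, lt_irrefl]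
    · subst h
      simp only [herParam, LinearMap.coe_mk, AddHom.coe_mk, Matrix.of_apply,
        lt_irrefl, dif_neg, not_false_iff]
      exact (d i).2
    · simp [herParam, h, h.not_gt, lt_irrefl, sigma_invol hK σ hσ]
  · intro hM
    have hM' : ∀ i j, σ (M j i) = M i j := fun i j => congrFun (congrFun hM i) j
    refine ⟨(fun i => ⟨M i i, hM' i i⟩, fun p => M p.1.1 p.1.2), ?_⟩
    ext i j
    rcases lt_trichotomy i j with h | h | h
    · simp [herParam, h, h.not_gt, hM' i j]
    · subst h; simp [herParam, lt_irrefl]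
    · simp [herParam, h, h.not_gt]

/-- The strictly-lower index set is equivalent to a sigma type. -/
def lowEquiv : LowIdx u ≃ Σ i : Fin u, Fin i.1 where
  toFun p := ⟨p.1.1, ⟨p.1.2.1, p.2⟩⟩
  invFun s := ⟨(s.1, ⟨s.2.1, lt_trans s.2.2 s.1.2⟩), s.2.2⟩
  left_inv := by rintro ⟨⟨i, j⟩, h⟩; rfl
  right_inv := by rintro ⟨i, j⟩; rfl

lemma card_lowIdx : 2 * Fintype.card (LowIdx u) = u * (u - 1) := by
  have h1 : Fintype.card (LowIdx u) = ∑ i : Fin u, i.1 := by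
    rw [Fintype.card_congr (lowEquiv u), Fintype.card_sigma]
    simp
  rw [h1, Fin.sum_univ_eq_sum_range (fun i => i) u, mul_comm,
    Finset.sum_range_id_mul_two]

include hF hK hσ in
lemma finrank_herSub_full : finrank F (herSub F u σ hfix) = u ^ 2 := by
  have e1 : (herSub F u σ hfix : Submodule F (Matrix (Fin u) (Fin u) K)) ≃ₗ[F]
      ((Fin u → fixSub F σ hfix) × (LowIdx u → K)) :=
    (LinearEquiv.ofEq _ _ (herParam_range hK σ hσ hfix u).symm).trans
      (LinearEquiv.ofInjective (herParam σ hfix u) (herParam_inj σ hfix u)).symm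
  rw [LinearEquiv.finrank_eq e1, Module.finrank_prod,
    Module.finrank_pi_fintype, Module.finrank_pi_fintype]
  simp only [Finset.sum_const, Finset.card_univ, Fintype.card_fin, smul_eq_mul,
    finrank_fixSub hF hK σ hσ hfix, finrank_FK hF hK]
  have h2 := card_lowIdx u
  rcases Nat.eq_zero_or_pos u with rfl | hu
  · simp at h2 ⊢
  · obtain ⟨m, rfl⟩ : ∃ m, u = m + 1 := ⟨u - 1, by omega⟩
    have h3 : (m + 1) * (m + 1 - 1) = (m + 1) * m := by simp
    rw [h3] at h2
    have e : (m + 1) ^ 2 = (m + 1) * m + (m + 1) := by ring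
    rw [e]
    omega

end Full

/-- The `F_q`-dimension of the space of Hermitian matrices with column space contained
in a `u`-dimensional `F_{q^2}`-subspace `U` equals `u^2`. -/
theorem dim_her_anticode
    {F K : Type*} [Field F] [Field K] [Algebra F K] [Fintype F] [Fintype K]
    {q n u : ℕ} (hF : Fintype.card F = q) (hK : Fintype.card K = q ^ 2)
    (σ : K ≃+* K) (hσ : ∀ x : K, σ x = x ^ q)
    (hfix : ∀ c : F, σ (algebraMap F K c) = algebraMap F K c)
    (U : Submodule K (Fin n → K)) (hu : finrank K U = u) :
    finrank F ↥(herSub F n σ hfix ⊓ (colRes U).restrictScalars F) = u ^ 2 := by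
  classical
  let b : Basis (Fin u) K U := Module.finBasisOfFinrankEq K (↥U) hu
  let C : Matrix (Fin n) (Fin u) K := Matrix.of fun i j => (b j : Fin n → K) i
  have hCsum : ∀ w : Fin u → K, C.mulVec w = ∑ j, w j • ((b j : Fin n → K)) := by
    intro w
    funext i
    simp [C, Matrix.mulVec, dotProduct, Finset.sum_apply, mul_comm]
  have hCmem : ∀ w, C.mulVec w ∈ U := by
    intro w
    rw [hCsum]
    exact Submodule.sum_mem U fun j _ => U.smul_mem _ (b j).2
  have hCsurj : ∀ x ∈ U, ∃ w, C.mulVec w = x := by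
    intro x hx
    refine ⟨b.repr ⟨x, hx⟩, ?_⟩
    rw [hCsum]
    have := congrArg (Subtype.val) (b.sum_repr ⟨x, hx⟩)
    simpa only [Submodule.coe_sum, Submodule.coe_smul] using this
  have hli : LinearIndependent K (fun j => ((b j : Fin n → K))) :=
    b.linearIndependent.map' U.subtype (Submodule.ker_subtype U)
  have hC0 : ∀ w, C.mulVec w = 0 → w = 0 := by
    intro w hw
    rw [hCsum] at hw
    funext j
    exact Fintype.linearIndependent_iff.mp hli w hw j
  have hker : LinearMap.ker (Matrix.toLin' C) = ⊥ := by
    rw [LinearMap.ker_eq_bot']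
    intro w hw
    exact hC0 w (by rwa [Matrix.toLin'_apply] at hw)
  obtain ⟨g, hg⟩ := LinearMap.exists_leftInverse_of_injective _ hker
  set D : Matrix (Fin u) (Fin n) K := LinearMap.toMatrix' g with hD
  have hDC : D * C = 1 := by
    have h := congrArg LinearMap.toMatrix' hg
    rwa [LinearMap.toMatrix'_comp, LinearMap.toMatrix'_toLin', LinearMap.toMatrix'_id] at h
  have hCD : ∀ M : Matrix (Fin n) (Fin n) K, (∀ v, M.mulVec v ∈ U) → C * D * M = M := by
    intro M hMv
    have hvec : ∀ v, (C * D * M).mulVec v = M.mulVec v := by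
      intro v
      obtain ⟨w, hw⟩ := hCsurj _ (hMv v)
      calc (C * D * M).mulVec v = (C * D).mulVec (M.mulVec v) :=
            (Matrix.mulVec_mulVec v (C * D) M).symm
        _ = (C * D).mulVec (C.mulVec w) := by rw [hw]
        _ = (C * D * C).mulVec w := Matrix.mulVec_mulVec w (C * D) C
        _ = C.mulVec w := by rw [Matrix.mul_assoc, hDC, Matrix.mul_one]
        _ = M.mulVec v := hw
    ext i j
    have h := congrFun (hvec (Pi.single j 1)) i
    simpa [Matrix.mulVec_single] using h
  have hCleft : ∀ {m : ℕ} (Y : Matrix (Fin u) (Fin m) K), C * Y = 0 → Y = 0 := by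
    intro m Y hY
    ext a j
    have h1 : C.mulVec (fun k => Y k j) = 0 := by
      funext i
      have := congrFun (congrFun hY i) j
      simpa [Matrix.mul_apply, Matrix.mulVec, dotProduct] using this
    have := congrFun (hC0 _ h1) a
    simpa using this
  -- the conjugation map
  let ψ : Matrix (Fin u) (Fin u) K →ₗ[F] Matrix (Fin n) (Fin n) K :=
    { toFun := fun B => C * B * starM σ C
      map_add' := fun B1 B2 => by simp only [Matrix.mul_add, Matrix.add_mul]
      map_smul' := fun c B => by simp only [RingHom.id_apply, Matrix.mul_smul, Matrix.smul_mul] }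
  have hmemT : ∀ B : herSub F u σ hfix,
      ψ B.1 ∈ herSub F n σ hfix ⊓ (colRes U).restrictScalars F := by
    intro B
    have hB : starM σ B.1 = B.1 := (mem_herSub' σ hfix B.1).mp B.2
    refine Submodule.mem_inf.mpr ⟨?_, ?_⟩
    · rw [mem_herSub' σ hfix]
      show starM σ (C * B.1 * starM σ C) = C * B.1 * starM σ C
      calc starM σ (C * B.1 * starM σ C)
          = starM σ (starM σ C) * starM σ (C * B.1) := starM_mul σ _ _
        _ = C * (starM σ B.1 * starM σ C) := by
            rw [starM_invol hK σ hσ, starM_mul]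
        _ = C * B.1 * starM σ C := by rw [hB, ← Matrix.mul_assoc]
    · rw [Submodule.restrictScalars_mem, mem_colRes]
      intro v
      rw [show (ψ B.1 : Matrix (Fin n) (Fin n) K) = C * (B.1 * starM σ C) from
          Matrix.mul_assoc C B.1 (starM σ C), ← Matrix.mulVec_mulVec]
      exact hCmem _
  let Ψ : herSub F u σ hfix →ₗ[F] ↥(herSub F n σ hfix ⊓ (colRes U).restrictScalars F) :=
    LinearMap.codRestrict _ (ψ.comp (Submodule.subtype _)) hmemT
  have hΨ : ∀ B : herSub F u σ hfix, (Ψ B : Matrix (Fin n) (Fin n) K) = C * B.1 * starM σ C :=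
    fun B => rfl
  have hinj : Function.Injective Ψ := by
    intro B1 B2 h
    have h0 : C * (B1.1 - B2.1) * starM σ C = 0 := by
      have := congrArg Subtype.val h
      rw [hΨ, hΨ] at this
      rw [Matrix.mul_sub, Matrix.sub_mul, this, sub_self]
    have h1 : (B1.1 - B2.1) * starM σ C = 0 :=
      hCleft _ (by rwa [Matrix.mul_assoc] at h0)
    have h2 : starM σ (B1.1 - B2.1) = 0 := by
      apply hCleft
      have := congrArg (starM σ) h1
      rwa [starM_mul, starM_invol hK σ hσ, starM_zero] at this
    have h3 : B1.1 - B2.1 = 0 := by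
      have := congrArg (starM σ) h2
      rwa [starM_invol hK σ hσ, starM_zero] at this
    exact Subtype.ext (sub_eq_zero.mp h3)
  have hsurj : Function.Surjective Ψ := by
    intro M
    obtain ⟨hMher, hMcol⟩ := Submodule.mem_inf.mp M.2
    have hM1 : starM σ M.1 = M.1 := (mem_herSub' σ hfix M.1).mp hMher
    have hM2 : ∀ v, (M.1 : Matrix (Fin n) (Fin n) K).mulVec v ∈ U := by
      rw [Submodule.restrictScalars_mem, mem_colRes] at hMcol
      exact hMcol
    have hCDM : C * D * M.1 = M.1 := hCD M.1 hM2
    have hMDC : M.1 * starM σ (C * D) = M.1 := by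
      have h4 := congrArg (starM σ) hCDM
      rwa [starM_mul, hM1] at h4
    set B : Matrix (Fin u) (Fin u) K := D * M.1 * starM σ D with hBdef
    have hBher : B ∈ herSub F u σ hfix := by
      rw [mem_herSub' σ hfix]
      calc starM σ (D * M.1 * starM σ D)
          = starM σ (starM σ D) * starM σ (D * M.1) := starM_mul σ _ _
        _ = D * (starM σ M.1 * starM σ D) := by
            rw [starM_invol hK σ hσ, starM_mul]
        _ = D * M.1 * starM σ D := by rw [hM1, ← Matrix.mul_assoc]
    refine ⟨⟨B, hBher⟩, Subtype.ext ?_⟩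
    rw [hΨ]
    calc C * (D * M.1 * starM σ D) * starM σ C
        = (C * D * M.1) * (starM σ D * starM σ C) := by simp only [← Matrix.mul_assoc]
      _ = M.1 * starM σ (C * D) := by rw [hCDM, ← starM_mul]
      _ = M.1 := hMDC
  rw [← LinearEquiv.finrank_eq (LinearEquiv.ofBijective Ψ ⟨hinj, hsurj⟩)]
  exact finrank_herSub_full hF hK σ hσ hfix u
end

section
/- Let U be a u-dimensional subspace of the ambient column space with u ≤ ⌊n/2⌋. Then the maximum rank of a matrix in X_{n,q}(U)* equals the maximum rank attained in X_{n,q} (in particular n for Sym and Her, and 2⌊n/2⌋ for Alt). -/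
open Matrix Module

section Defs

variable {K : Type*} [Field K] {n : ℕ}

/-- The set of alternating `n×n` matrices. -/
def altSet (K : Type*) [Field K] (n : ℕ) : Set (Matrix (Fin n) (Fin n) K) :=
  {M | Mᵀ = -M ∧ ∀ i, M i i = 0}

/-- The set of symmetric `n×n` matrices. -/
def symSet (K : Type*) [Field K] (n : ℕ) : Set (Matrix (Fin n) (Fin n) K) :=
  {M | Mᵀ = M}

/-- The set of `σ`-Hermitian `n×n` matrices. -/
def herSet (K : Type*) [Field K] (n : ℕ) (σ : K ≃+* K) : Set (Matrix (Fin n) (Fin n) K) :=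
  {M | (M.map σ)ᵀ = M}

/-- The set of matrices with column space contained in `U`. -/
def colSet (U : Submodule K (Fin n → K)) : Set (Matrix (Fin n) (Fin n) K) :=
  {M | ∀ v : Fin n → K, M.mulVec v ∈ U}

/-- The bilinear form `Σ_{i<j} a_{ij} b_{ij}` used on alternating matrices. -/
def altForm (A B : Matrix (Fin n) (Fin n) K) : K :=
  ∑ p ∈ Finset.univ.filter (fun p : Fin n × Fin n => p.1 < p.2), A p.1 p.2 * B p.1 p.2

/-- The dual in `Alt_{n,q}` of the anticode `Alt_{n,q}(U)`. -/
def dualAlt (U : Submodule K (Fin n → K)) : Set (Matrix (Fin n) (Fin n) K) :=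
  {B ∈ altSet K n | ∀ A ∈ altSet K n ∩ colSet U, altForm A B = 0}

/-- The dual in `Sym_{n,q}` of the anticode `Sym_{n,q}(U)`. -/
def dualSym (U : Submodule K (Fin n → K)) : Set (Matrix (Fin n) (Fin n) K) :=
  {B ∈ symSet K n | ∀ A ∈ symSet K n ∩ colSet U, Matrix.trace (A * Bᵀ) = 0}

/-- The dual in `Her_{n,q}` of the anticode `Her_{n,q}(U)`. -/
def dualHer (σ : K ≃+* K) (U : Submodule K (Fin n → K)) : Set (Matrix (Fin n) (Fin n) K) :=
  {B ∈ herSet K n σ | ∀ A ∈ herSet K n σ ∩ colSet U, Matrix.trace (A * Bᵀ) = 0}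

/-- The maximum rank of a nonzero element of a set of matrices. -/
noncomputable def maxrk (D : Set (Matrix (Fin n) (Fin n) K)) : ℕ :=
  sSup {r | ∃ M ∈ D, M ≠ 0 ∧ M.rank = r}

end Defs

section Aux
variable {L : Type*} [Field L] {n u m : ℕ}


lemma exists_good_basis (U : Submodule L (Fin n → L)) (hU : finrank L U = u) (hun : u ≤ n) :
    ∃ b : Basis (Fin n) L (Fin n → L),
      (∀ k : Fin n, (k : ℕ) < u → b k ∈ U) ∧
      (∀ w : Fin n → L, w ∈ U → ∀ i : Fin n, u ≤ (i : ℕ) → b.repr w i = 0) := by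
  obtain ⟨V, hV⟩ := Submodule.exists_isCompl U
  have hn : finrank L (Fin n → L) = n := by simp
  have hsum := Submodule.finrank_add_eq_of_isCompl hV
  have hdim : finrank L V = n - u := by omega
  let bU : Basis (Fin u) L U := Module.finBasisOfFinrankEq L U hU
  let bV : Basis (Fin (n-u)) L V := Module.finBasisOfFinrankEq L V hdim
  let e : (U × V) ≃ₗ[L] (Fin n → L) := Submodule.prodEquivOfIsCompl U V hV
  let b0 : Basis (Fin u ⊕ Fin (n-u)) L (Fin n → L) := (bU.prod bV).map e
  let eidx : (Fin u ⊕ Fin (n-u)) ≃ Fin n := finSumFinEquiv.trans (finCongr (by omega))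
  refine ⟨b0.reindex eidx, ?_, ?_⟩
  · intro k hk
    have h1 : eidx.symm k = Sum.inl ⟨(k : ℕ), hk⟩ := by
      apply eidx.injective
      simp only [Equiv.apply_symm_apply, eidx]
      apply Fin.ext
      simp [finSumFinEquiv]
    rw [Basis.reindex_apply, h1]
    have : b0 (Sum.inl ⟨(k:ℕ), hk⟩) = e ((bU.prod bV) (Sum.inl ⟨(k:ℕ), hk⟩)) := by
      simp [b0]
    rw [this]
    have hval : ((bU.prod bV) (Sum.inl ⟨(k:ℕ), hk⟩)) =
        ((bU ⟨(k:ℕ), hk⟩ : ↥U), (0 : ↥V)) :=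
      Prod.ext (Basis.prod_apply_inl_fst _ _ _) (Basis.prod_apply_inl_snd _ _ _)
    rw [hval]
    have : e ((bU ⟨(k:ℕ), hk⟩ : ↥U), (0 : ↥V)) = ((bU ⟨(k:ℕ), hk⟩ : ↥U) : Fin n → L) := by
      simp [e, Submodule.prodEquivOfIsCompl]
      erw [LinearEquiv.ofBijective_apply]
      simp
    rw [this]
    exact (bU ⟨(k:ℕ), hk⟩).2
  · intro w hw i hi
    rw [Basis.repr_reindex_apply]
    have h1 : eidx.symm i = Sum.inr ⟨(i : ℕ) - u, by omega⟩ := by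
      apply eidx.injective
      simp only [Equiv.apply_symm_apply, eidx]
      apply Fin.ext
      simp [finSumFinEquiv]
      omega
    rw [h1]
    have : b0.repr w = (bU.prod bV).repr (e.symm w) := by simp [b0]
    rw [this, Basis.prod_repr_inr]
    have hx : (e.symm w).2 = 0 := by
      have h2 := Submodule.prodEquivOfIsCompl_symm_apply_left (p := U) (q := V) hV ⟨w, hw⟩
      rw [show w = ((⟨w, hw⟩ : ↥U) : Fin n → L) from rfl]
      rw [show e.symm = (Submodule.prodEquivOfIsCompl U V hV).symm from rfl, h2]
    rw [hx, LinearEquiv.map_zero]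
    simp


lemma sSup_rank_eq {S : Set ℕ} {c : ℕ} (hub : ∀ r ∈ S, r ≤ c) (hc : c ∈ S ∨ c = 0) :
    sSup S = c := by
  rcases hc with h | rfl
  · exact le_antisymm (csSup_le ⟨c, h⟩ hub) (le_csSup ⟨c, hub⟩ h)
  · rcases S.eq_empty_or_nonempty with rfl | hne
    · exact csSup_empty
    · exact le_antisymm (csSup_le hne hub) (Nat.zero_le _)

lemma sum_pairs_eq_zero {f : Fin n × Fin n → L}
    (h1 : ∀ p : Fin n × Fin n, f p + f p.swap = 0) (h0 : ∀ i, f (i, i) = 0) :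
    ∑ p : Fin n × Fin n, f p = 0 :=
  Finset.sum_ninvolution Prod.swap h1
    (fun a ha => by
      intro hsw
      apply ha
      have h2 : a = (a.1, a.1) := Prod.ext rfl (congrArg Prod.fst hsw)
      rw [h2]; exact h0 a.1)
    (fun a => Finset.mem_univ _) (fun a => Prod.swap_swap a)

/-- An alternating matrix of odd size has zero determinant (any characteristic). -/
lemma det_eq_zero_of_alt_odd (hodd : ¬ 2 ∣ n) (M : Matrix (Fin n) (Fin n) L)
    (hMt : Mᵀ = -M) (hMd : ∀ i, M i i = 0) : M.det = 0 := by
  classical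
  -- generic alternating matrix over ℤ-polynomials
  set R := MvPolynomial (Fin n × Fin n) ℤ
  set G : Matrix (Fin n) (Fin n) R := Matrix.of (fun i j =>
    if i < j then MvPolynomial.X (i, j) else if j < i then - MvPolynomial.X (j, i) else 0) with hG
  have hGt : Gᵀ = -G := by
    refine Matrix.ext fun i j => ?_
    simp only [transpose_apply, neg_apply, hG, Matrix.of_apply]
    rcases lt_trichotomy i j with h | h | h
    · simp [h, not_lt.mpr h.le, h.ne']
    · simp [h]
    · simp [h, not_lt.mpr h.le, h.ne']
      exact (neg_neg (MvPolynomial.X (j, i) : R)).symm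
  have hdetG : G.det = 0 := by
    have h1 : G.det = (-1) ^ n * G.det := by
      conv_lhs => rw [← Matrix.det_transpose G, hGt]
      rw [show -G = (-1 : R) • G by simp, Matrix.det_smul]
      simp
    have hn1 : ((-1 : R)) ^ n = -1 := Odd.neg_one_pow (Nat.odd_iff.mpr (by omega))
    rw [hn1] at h1
    have h2 : (2 : R) * G.det = 0 := by linear_combination h1
    rcases mul_eq_zero.mp h2 with h | h
    · exact absurd h (by norm_num)
    · exact h
  -- evaluate
  let φ : R →+* L := (MvPolynomial.eval₂Hom (Int.castRingHom L) (fun p => M p.1 p.2))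
  have hmap : G.map φ = M := by
    refine Matrix.ext fun i j => ?_
    rw [Matrix.map_apply, hG, Matrix.of_apply]
    rcases lt_trichotomy i j with h | h | h
    · rw [if_pos h, MvPolynomial.eval₂Hom_X']
    · subst h
      rw [if_neg (lt_irrefl i), if_neg (lt_irrefl i), map_zero, hMd i]
    · rw [if_neg (not_lt.mpr h.le), if_pos h, map_neg, MvPolynomial.eval₂Hom_X']
      have h2 : M i j = - M j i := by
        have h3 := congrFun (congrFun hMt j) i
        simpa using h3
      show -(M j i) = M i j
      rw [h2]
  calc M.det = (G.map φ).det := by rw [hmap]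
    _ = φ G.det := (RingHom.map_det φ G).symm
    _ = 0 := by rw [hdetG]; simp

lemma rank_le_of_det_eq_zero {M : Matrix (Fin n) (Fin n) L} (h : M.det = 0) (hn : 0 < n) :
    M.rank ≤ n - 1 := by
  classical
  obtain ⟨v, hv, hMv⟩ := Matrix.exists_mulVec_eq_zero_iff.mpr h
  have hker : v ∈ LinearMap.ker M.mulVecLin := by simpa [Matrix.mulVecLin_apply] using hMv
  haveI hnt : Nontrivial (LinearMap.ker M.mulVecLin) :=
    ⟨⟨⟨v, hker⟩, 0, by simp [Subtype.ext_iff, hv]⟩⟩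
  have hpos : 0 < finrank L (LinearMap.ker M.mulVecLin) := finrank_pos
  have hrn := LinearMap.finrank_range_add_finrank_ker M.mulVecLin
  have : finrank L (Fin n → L) = n := by simp
  rw [this] at hrn
  have : M.rank = finrank L (LinearMap.range M.mulVecLin) := rfl
  omega


lemma mul3_apply (P M Q : Matrix (Fin n) (Fin n) L) (i j : Fin n) :
    (P * M * Q) i j = ∑ q : Fin n × Fin n, P i q.1 * M q.1 q.2 * Q q.2 j := by
  rw [Matrix.mul_apply]
  simp_rw [Matrix.mul_apply, Finset.sum_mul]
  rw [Fintype.sum_prod_type]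
  exact Finset.sum_comm

lemma sum_pairs_split (F : Fin n × Fin n → L) (hdiag : ∀ i, F (i, i) = 0) :
    ∑ q : Fin n × Fin n, F q =
      ∑ p ∈ Finset.univ.filter (fun p : Fin n × Fin n => p.1 < p.2), (F p + F p.swap) := by
  classical
  have hsub : (Finset.univ.filter (fun p : Fin n × Fin n => p.2 < p.1)) ⊆
      (Finset.univ.filter (fun p : Fin n × Fin n => ¬ p.1 < p.2)) := by
    intro p hp
    simp only [Finset.mem_filter, Finset.mem_univ, true_and, not_lt] at hp ⊢
    exact hp.le
  have h0 : ∀ p ∈ Finset.univ.filter (fun p : Fin n × Fin n => ¬ p.1 < p.2),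
      p ∉ Finset.univ.filter (fun p : Fin n × Fin n => p.2 < p.1) → F p = 0 := by
    intro p hp hnp
    simp only [Finset.mem_filter, Finset.mem_univ, true_and, not_lt] at hp hnp
    have hpp : p = (p.1, p.1) := Prod.ext rfl (le_antisymm hnp hp).symm
    rw [hpp]; exact hdiag p.1
  have e1 : ∑ p ∈ Finset.univ.filter (fun p : Fin n × Fin n => ¬ p.1 < p.2), F p
      = ∑ p ∈ Finset.univ.filter (fun p : Fin n × Fin n => p.2 < p.1), F p :=
    (Finset.sum_subset hsub h0).symm
  have e2 : ∑ p ∈ Finset.univ.filter (fun p : Fin n × Fin n => p.2 < p.1), F p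
      = ∑ p ∈ Finset.univ.filter (fun p : Fin n × Fin n => p.1 < p.2), F p.swap := by
    refine Finset.sum_nbij' Prod.swap Prod.swap ?_ ?_ ?_ ?_ ?_
    · intro a ha; simpa using (by simpa using ha : a.2 < a.1)
    · intro a ha; simpa using (by simpa using ha : a.1 < a.2)
    · intro a _; exact Prod.swap_swap a
    · intro a _; exact Prod.swap_swap a
    · intro a _; rfl
  calc ∑ q : Fin n × Fin n, F q
      = ∑ p ∈ Finset.univ.filter (fun p : Fin n × Fin n => p.1 < p.2), F p
        + ∑ p ∈ Finset.univ.filter (fun p : Fin n × Fin n => ¬ p.1 < p.2), F p :=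
        (Finset.sum_filter_add_sum_filter_not _ _ _).symm
    _ = _ := by rw [e1, e2, ← Finset.sum_add_distrib]


noncomputable def gMat (b : Basis (Fin n) L (Fin n → L)) : Matrix (Fin n) (Fin n) L :=
  LinearMap.toMatrix' (b.equivFun.symm : (Fin n → L) →ₗ[L] (Fin n → L))

noncomputable def gInv (b : Basis (Fin n) L (Fin n → L)) : Matrix (Fin n) (Fin n) L :=
  LinearMap.toMatrix' (b.equivFun : (Fin n → L) →ₗ[L] (Fin n → L))

lemma gMat_mul_gInv (b : Basis (Fin n) L (Fin n → L)) : gMat b * gInv b = 1 := by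
  rw [gMat, gInv, ← LinearMap.toMatrix'_comp, ← LinearMap.toMatrix'_id (R := L) (n := Fin n)]
  congr 1
  ext v i
  simp

lemma gInv_mul_gMat (b : Basis (Fin n) L (Fin n → L)) : gInv b * gMat b = 1 := by
  rw [gMat, gInv, ← LinearMap.toMatrix'_comp, ← LinearMap.toMatrix'_id (R := L) (n := Fin n)]
  congr 1
  ext v i
  simp

lemma gMat_apply (b : Basis (Fin n) L (Fin n → L)) (i k : Fin n) : gMat b i k = b k i := by
  rw [gMat, LinearMap.toMatrix'_apply]
  have : (fun j => if j = k then (1:L) else 0) = Pi.single k 1 := by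
    ext j; simp [Pi.single_apply, eq_comm]
  simp [Module.Basis.equivFun_symm_apply, Pi.single_apply, ite_smul,
    apply_ite (fun g : Fin n → L => g i), Finset.sum_ite_eq']

lemma gInv_mulVec (b : Basis (Fin n) L (Fin n → L)) (w : Fin n → L) :
    (gInv b).mulVec w = ⇑(b.repr w) := by
  rw [gInv, ← Matrix.toLin'_apply, Matrix.toLin'_toMatrix']
  ext i
  simp [Basis.equivFun_apply]

/-- Columns of `gInv b * A * C` vanish below row `u` when `A` has column space in `U`. -/
lemma gInv_mul_support (b : Basis (Fin n) L (Fin n → L)) (U : Submodule L (Fin n → L))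
    (hrepr : ∀ w ∈ U, ∀ i : Fin n, u ≤ (i : ℕ) → b.repr w i = 0)
    (A C : Matrix (Fin n) (Fin n) L) (hA : ∀ v, A.mulVec v ∈ U)
    (i j : Fin n) (hi : u ≤ (i : ℕ)) : (gInv b * A * C) i j = 0 := by
  have h1 : (gInv b * A * C) i j = ((gInv b * A * C).mulVec (Pi.single j 1)) i := by
    rw [Matrix.mulVec_single]; simp
  rw [h1, ← Matrix.mulVec_mulVec, ← Matrix.mulVec_mulVec, gInv_mulVec]
  exact hrepr _ (hA _) i hi

/-- Congruence preserves the alternating property (in every characteristic). -/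
lemma alt_congr (h M : Matrix (Fin n) (Fin n) L) (hM : Mᵀ = -M ∧ ∀ i, M i i = 0) :
    (h * M * hᵀ)ᵀ = -(h * M * hᵀ) ∧ ∀ i, (h * M * hᵀ) i i = 0 := by
  constructor
  · rw [Matrix.transpose_mul, Matrix.transpose_mul, Matrix.transpose_transpose, hM.1,
      Matrix.neg_mul, Matrix.mul_neg, ← Matrix.mul_assoc]
  · intro i
    rw [mul3_apply]
    refine sum_pairs_eq_zero (fun p => ?_) (fun k => ?_)
    · have h' := congrFun (congrFun hM.1 p.2) p.1
      simp only [Matrix.transpose_apply, Matrix.neg_apply] at h'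
      have hMp : M p.2 p.1 = - M p.1 p.2 := by linear_combination h'
      simp only [Prod.swap, Matrix.transpose_apply, hMp]
      ring
    · simp [hM.2 k]


def pairFun (n m : ℕ) (hm : 2 * m ≤ n) : Fin n → Fin n := fun i =>
  if h : (i : ℕ) < m then ⟨(i : ℕ) + m, by omega⟩
  else if h2 : (i : ℕ) < 2 * m then ⟨(i : ℕ) - m, by omega⟩ else i

lemma pairFun_val (hm : 2 * m ≤ n) (i : Fin n) : ((pairFun n m hm i : Fin n) : ℕ) =
    if (i : ℕ) < m then (i : ℕ) + m else if (i : ℕ) < 2 * m then (i : ℕ) - m else (i : ℕ) := by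
  unfold pairFun
  split_ifs <;> rfl

lemma pairFun_involutive (hm : 2 * m ≤ n) : Function.Involutive (pairFun n m hm) := by
  intro i
  apply Fin.ext
  rw [pairFun_val hm, pairFun_val hm]
  split_ifs <;> omega

def pairPerm (hm : 2 * m ≤ n) : Equiv.Perm (Fin n) :=
  (pairFun_involutive hm).toPerm

lemma pairPerm_apply (hm : 2 * m ≤ n) (i : Fin n) : pairPerm hm i = pairFun n m hm i := rfl

lemma pairPerm_val (hm : 2 * m ≤ n) (i : Fin n) : ((pairPerm hm i : Fin n) : ℕ) =
    if (i : ℕ) < m then (i : ℕ) + m else if (i : ℕ) < 2 * m then (i : ℕ) - m else (i : ℕ) := by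
  rw [pairPerm_apply, pairFun_val]

/-- The symmetric/Hermitian witness: permutation matrix of the pairing involution. -/
def Wsym (L : Type*) [Field L] {n m : ℕ} (hm : 2 * m ≤ n) : Matrix (Fin n) (Fin n) L :=
  (pairPerm hm).permMatrix L

lemma Wsym_apply (hm : 2 * m ≤ n) (i j : Fin n) :
    Wsym L hm i j = if pairPerm hm i = j then 1 else 0 := by
  simp [Wsym, Equiv.Perm.permMatrix, PEquiv.toMatrix_apply, Equiv.toPEquiv_apply]

lemma Wsym_symm (hm : 2 * m ≤ n) : (Wsym L hm)ᵀ = Wsym L hm := by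
  refine Matrix.ext fun i j => ?_
  rw [Matrix.transpose_apply, Wsym_apply, Wsym_apply]
  have h : pairPerm hm j = i ↔ pairPerm hm i = j := by
    constructor
    · intro h; rw [← h]; exact (pairFun_involutive hm j)
    · intro h; rw [← h]; exact (pairFun_involutive hm i)
  simp [h]

lemma Wsym_isUnit (hm : 2 * m ≤ n) : IsUnit (Wsym L hm) := by
  rw [Matrix.isUnit_iff_isUnit_det, Wsym, Matrix.det_permutation]
  rcases Int.units_eq_one_or (Equiv.Perm.sign (pairPerm hm)) with h | h <;> rw [h] <;> simp

lemma Wsym_rank (hm : 2 * m ≤ n) : (Wsym L hm).rank = n := by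
  rw [Matrix.rank_of_isUnit _ (Wsym_isUnit hm), Fintype.card_fin]

lemma Wsym_block (hm : 2 * m ≤ n) (hum : u ≤ m) (i j : Fin n)
    (hi : (i : ℕ) < u) (hj : (j : ℕ) < u) : Wsym L hm i j = 0 := by
  rw [Wsym_apply, if_neg]
  intro h
  have h2 := pairPerm_val hm i
  rw [h, if_pos (by omega : (i:ℕ) < m)] at h2
  omega

lemma Wsym_map (hm : 2 * m ≤ n) (σ : L ≃+* L) : (Wsym L hm).map σ = Wsym L hm := by
  refine Matrix.ext fun i j => ?_
  rw [Matrix.map_apply, Wsym_apply, apply_ite σ]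
  simp

/-- The alternating witness. -/
def Walt (L : Type*) [Field L] (n m : ℕ) : Matrix (Fin n) (Fin n) L :=
  Matrix.of fun i j =>
    if (i : ℕ) < m ∧ (j : ℕ) = (i : ℕ) + m then 1
    else if (j : ℕ) < m ∧ (i : ℕ) = (j : ℕ) + m then -1 else 0

lemma Walt_alt : (Walt L n m)ᵀ = -(Walt L n m) ∧ ∀ i, Walt L n m i i = 0 := by
  constructor
  · refine Matrix.ext fun i j => ?_
    rw [Matrix.transpose_apply, Matrix.neg_apply]
    show (if (j:ℕ) < m ∧ (i:ℕ) = (j:ℕ) + m then (1:L)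
        else if (i:ℕ) < m ∧ (j:ℕ) = (i:ℕ) + m then -1 else 0)
      = -(if (i:ℕ) < m ∧ (j:ℕ) = (i:ℕ) + m then (1:L)
        else if (j:ℕ) < m ∧ (i:ℕ) = (j:ℕ) + m then -1 else 0)
    split_ifs <;> first | (exfalso; omega) | norm_num
  · intro i
    show (if (i:ℕ) < m ∧ (i:ℕ) = (i:ℕ) + m then (1:L)
      else if (i:ℕ) < m ∧ (i:ℕ) = (i:ℕ) + m then -1 else 0) = 0
    split_ifs with h1
    · exact absurd h1 (by omega)
    · rfl

lemma Walt_block (hum : u ≤ m) (i j : Fin n)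
    (hi : (i : ℕ) < u) (hj : (j : ℕ) < u) : Walt L n m i j = 0 := by
  show (if (i:ℕ) < m ∧ (j:ℕ) = (i:ℕ) + m then (1:L)
      else if (j:ℕ) < m ∧ (i:ℕ) = (j:ℕ) + m then -1 else 0) = 0
  split_ifs with h1 h2
  · exact absurd h1 (by omega)
  · exact absurd h2 (by omega)
  · rfl

lemma Walt_rank (hm : 2 * m ≤ n) : (Walt L n m).rank = 2 * m := by
  classical
  have hfact : Walt L n m = Matrix.diagonal
      (fun i : Fin n => if (i : ℕ) < m then (1:L) else if (i : ℕ) < 2 * m then -1 else 0)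
      * (pairPerm hm).permMatrix L := by
    refine Matrix.ext fun i j => ?_
    rw [Matrix.diagonal_mul]
    have hP : (pairPerm hm).permMatrix L i j = if pairPerm hm i = j then (1:L) else 0 := by
      simp [Equiv.Perm.permMatrix, PEquiv.toMatrix_apply, Equiv.toPEquiv_apply]
    rw [hP]
    have hiff : pairPerm hm i = j ↔
        (if (i : ℕ) < m then (i : ℕ) + m else if (i : ℕ) < 2 * m then (i : ℕ) - m else (i : ℕ))
          = (j : ℕ) := by
      rw [Fin.ext_iff, pairPerm_val]
    rw [show (if pairPerm hm i = j then (1:L) else 0)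
        = (if ((if (i:ℕ) < m then (i:ℕ) + m else if (i:ℕ) < 2*m then (i:ℕ) - m else (i:ℕ))
            = (j:ℕ)) then (1:L) else 0) from if_congr hiff rfl rfl]
    show (if (i:ℕ) < m ∧ (j:ℕ) = (i:ℕ) + m then (1:L)
        else if (j:ℕ) < m ∧ (i:ℕ) = (j:ℕ) + m then -1 else 0)
      = (if (i : ℕ) < m then (1:L) else if (i : ℕ) < 2 * m then -1 else 0)
        * (if ((if (i:ℕ) < m then (i:ℕ) + m else if (i:ℕ) < 2*m then (i:ℕ) - m else (i:ℕ))
            = (j:ℕ)) then (1:L) else 0)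
    split_ifs <;> first | (exfalso; omega) | norm_num
  rw [hfact]
  have hPunit : IsUnit ((pairPerm hm).permMatrix L).det := by
    rw [Matrix.det_permutation]
    rcases Int.units_eq_one_or (Equiv.Perm.sign (pairPerm hm)) with h | h <;> rw [h] <;> simp
  rw [Matrix.rank_mul_eq_left_of_isUnit_det _ _ hPunit, Matrix.rank_diagonal]
  have hiff2 : ∀ i : Fin n,
      ((if (i : ℕ) < m then (1:L) else if (i : ℕ) < 2 * m then -1 else 0) ≠ 0)
        ↔ (i : ℕ) < 2 * m := by
    intro i
    split_ifs with h1 h2 <;> simp <;> omega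
  rw [Fintype.card_congr (Equiv.subtypeEquivRight hiff2)]
  rw [Fintype.card_congr (⟨fun x => (⟨(x : Fin n), x.2⟩ : Fin (2*m)),
    fun y => ⟨⟨(y : ℕ), by omega⟩, y.2⟩,
    fun x => by apply Subtype.ext; apply Fin.ext; rfl,
    fun y => by apply Fin.ext; rfl⟩ :
    {i : Fin n // (i : ℕ) < 2 * m} ≃ Fin (2 * m)), Fintype.card_fin]

end Aux

section WitnessLemmas

variable {L : Type*} [Field L] {n u m : ℕ}

/-- Congruence preserves Hermitian matrices. -/
lemma her_congr (σ : L ≃+* L) (hinv : ∀ x, σ (σ x) = x) (h M : Matrix (Fin n) (Fin n) L)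
    (hM : (M.map σ)ᵀ = M) : (((h * M * (h.map (σ : L →+* L))ᵀ).map σ)ᵀ)
      = h * M * (h.map (σ : L →+* L))ᵀ := by
  have hcoe : ⇑σ = ⇑(σ : L →+* L) := rfl
  rw [hcoe] at hM ⊢
  have hmm : ((h.map (σ : L →+* L))ᵀ).map (σ : L →+* L) = hᵀ := by
    rw [← Matrix.transpose_map, Matrix.map_map]
    have : (⇑(σ : L →+* L) ∘ ⇑(σ : L →+* L)) = id := funext fun x => hinv x
    rw [this, Matrix.map_id]
  rw [Matrix.map_mul (f := (σ : L →+* L)), Matrix.map_mul (f := (σ : L →+* L)), hmm]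
  rw [Matrix.transpose_mul, Matrix.transpose_mul, Matrix.transpose_transpose]
  rw [hM]
  rw [← Matrix.mul_assoc]

theorem dualAlt_witness (hm : 2 * m ≤ n) (hum : u ≤ m)
    (U : Submodule L (Fin n → L)) (b : Basis (Fin n) L (Fin n → L))
    (hrepr : ∀ w ∈ U, ∀ i : Fin n, u ≤ (i : ℕ) → b.repr w i = 0) :
    ∃ B ∈ dualAlt U, B.rank = 2 * m := by
  classical
  set g := gMat b with hgdef
  set g' := gInv b with hg'def
  have hgg' : g * g' = 1 := gMat_mul_gInv b
  have hg'g : g' * g = 1 := gInv_mul_gMat b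
  have hgtg : g'ᵀ * gᵀ = 1 := by rw [← Matrix.transpose_mul, hgg', Matrix.transpose_one]
  have hgtg' : gᵀ * g'ᵀ = 1 := by rw [← Matrix.transpose_mul, hg'g, Matrix.transpose_one]
  set W := Walt L n m with hWdef
  set B := g'ᵀ * W * g' with hBdef
  have hWalt := Walt_alt (L := L) (n := n) (m := m)
  have hBalt : Bᵀ = -B ∧ ∀ i, B i i = 0 := by
    have := alt_congr (L := L) g'ᵀ W hWalt
    rwa [Matrix.transpose_transpose] at this
  refine ⟨B, ⟨hBalt, ?_⟩, ?_⟩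
  · -- dual condition
    rintro A ⟨⟨hAt, hAd⟩, hAcol⟩
    set A₀ := g' * A * g'ᵀ with hA₀def
    have hA₀alt : A₀ᵀ = -A₀ ∧ ∀ i, A₀ i i = 0 := alt_congr g' A ⟨hAt, hAd⟩
    have hA₀rel : ∀ k l : Fin n, A₀ l k = -A₀ k l := by
      intro k l
      have h' := congrFun (congrFun hA₀alt.1 k) l
      simp only [Matrix.transpose_apply, Matrix.neg_apply] at h'
      linear_combination h'
    have hA₀supp : ∀ k l : Fin n, A₀ k l ≠ 0 → (k : ℕ) < u ∧ (l : ℕ) < u := by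
      intro k l hne
      constructor
      · by_contra hc
        exact hne (gInv_mul_support b U hrepr A g'ᵀ hAcol k l (by omega))
      · by_contra hc
        have h0 : A₀ l k = 0 := gInv_mul_support b U hrepr A g'ᵀ hAcol l k (by omega)
        have := hA₀rel k l
        rw [h0] at this
        exact hne (by linear_combination this)
    have hAeq : A = g * A₀ * gᵀ := by
      rw [hA₀def]
      calc A = (g * g') * A * (g'ᵀ * gᵀ) := by rw [hgg', hgtg, Matrix.one_mul, Matrix.mul_one]
        _ = g * (g' * A * g'ᵀ) * gᵀ := by simp only [Matrix.mul_assoc]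
    have hWeq : gᵀ * B * g = W := by
      rw [hBdef]
      calc gᵀ * (g'ᵀ * W * g') * g = (gᵀ * g'ᵀ) * W * (g' * g) := by
            simp only [Matrix.mul_assoc]
        _ = W := by rw [hgtg', hg'g, Matrix.one_mul, Matrix.mul_one]
    have hAentry : ∀ i j, A i j = ∑ q : Fin n × Fin n, g i q.1 * A₀ q.1 q.2 * g j q.2 := by
      intro i j
      conv_lhs => rw [hAeq]
      rw [mul3_apply]
      exact Finset.sum_congr rfl fun q _ => by rw [Matrix.transpose_apply]
    have step1 : altForm A B = ∑ q : Fin n × Fin n,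
        A₀ q.1 q.2 * ∑ p ∈ Finset.univ.filter (fun p : Fin n × Fin n => p.1 < p.2),
          g p.1 q.1 * g p.2 q.2 * B p.1 p.2 := by
      rw [altForm]
      simp_rw [hAentry, Finset.sum_mul]
      rw [Finset.sum_comm]
      refine Finset.sum_congr rfl fun q _ => ?_
      rw [Finset.mul_sum]
      exact Finset.sum_congr rfl fun p _ => by ring
    have hCdiff : ∀ k l : Fin n,
        (∑ p ∈ Finset.univ.filter (fun p : Fin n × Fin n => p.1 < p.2),
          g p.1 k * g p.2 l * B p.1 p.2)
        - (∑ p ∈ Finset.univ.filter (fun p : Fin n × Fin n => p.1 < p.2),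
          g p.1 l * g p.2 k * B p.1 p.2) = W k l := by
      intro k l
      have h1 : (gᵀ * B * g) k l = ∑ q : Fin n × Fin n, g q.1 k * B q.1 q.2 * g q.2 l := by
        rw [mul3_apply]
        exact Finset.sum_congr rfl fun q _ => by rw [Matrix.transpose_apply]
      have h2 := sum_pairs_split (fun q : Fin n × Fin n => g q.1 k * B q.1 q.2 * g q.2 l)
        (fun i => by show g i k * B i i * g i l = 0; rw [hBalt.2 i]; ring)
      rw [h2] at h1
      rw [← hWeq, h1, ← Finset.sum_sub_distrib]
      refine Finset.sum_congr rfl fun p hp => ?_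
      have hBrel : B p.2 p.1 = -B p.1 p.2 := by
        have h' := congrFun (congrFun hBalt.1 p.1) p.2
        simp only [Matrix.transpose_apply, Matrix.neg_apply] at h'
        linear_combination h'
      simp only [Prod.fst_swap, Prod.snd_swap]
      rw [hBrel]
      ring
    rw [step1]
    refine sum_pairs_eq_zero (fun p => ?_) (fun i => by rw [hA₀alt.2 i, zero_mul])
    simp only [Prod.fst_swap, Prod.snd_swap]
    by_cases hz : A₀ p.1 p.2 = 0
    · have hz2 : A₀ p.2 p.1 = 0 := by rw [hA₀rel p.1 p.2, hz, neg_zero]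
      rw [hz, hz2, zero_mul, zero_mul, add_zero]
    · obtain ⟨hk, hl⟩ := hA₀supp _ _ hz
      have hW0 : W p.1 p.2 = 0 := Walt_block hum _ _ hk hl
      have hrel := hA₀rel p.1 p.2
      have hdiff := hCdiff p.1 p.2
      rw [hW0] at hdiff
      rw [hrel]
      linear_combination A₀ p.1 p.2 * hdiff
  · -- rank
    have hg'unit : IsUnit g'.det :=
      IsUnit.of_mul_eq_one (a := g'.det) g.det (by rw [← Matrix.det_mul, hg'g, Matrix.det_one])
    have hg'tunit : IsUnit g'ᵀ.det := by rwa [Matrix.det_transpose]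
    rw [hBdef, Matrix.rank_mul_eq_left_of_isUnit_det g' (g'ᵀ * W) hg'unit,
      Matrix.rank_mul_eq_right_of_isUnit_det g'ᵀ W hg'tunit]
    exact Walt_rank hm

theorem dualSym_witness (hm : 2 * m ≤ n) (hum : u ≤ m)
    (U : Submodule L (Fin n → L)) (b : Basis (Fin n) L (Fin n → L))
    (hrepr : ∀ w ∈ U, ∀ i : Fin n, u ≤ (i : ℕ) → b.repr w i = 0) :
    ∃ B ∈ dualSym U, B.rank = n := by
  classical
  set g := gMat b with hgdef
  set g' := gInv b with hg'def
  have hgg' : g * g' = 1 := gMat_mul_gInv b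
  have hg'g : g' * g = 1 := gInv_mul_gMat b
  have hgtg : g'ᵀ * gᵀ = 1 := by rw [← Matrix.transpose_mul, hgg', Matrix.transpose_one]
  have hgtg' : gᵀ * g'ᵀ = 1 := by rw [← Matrix.transpose_mul, hg'g, Matrix.transpose_one]
  set W := Wsym L hm with hWdef
  set B := g'ᵀ * W * g' with hBdef
  have hBsym : Bᵀ = B := by
    rw [hBdef, Matrix.transpose_mul, Matrix.transpose_mul, Matrix.transpose_transpose,
      Wsym_symm hm, ← Matrix.mul_assoc]
  refine ⟨B, ⟨hBsym, ?_⟩, ?_⟩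
  · rintro A ⟨hAsym, hAcol⟩
    set A₀ := g' * A * g'ᵀ with hA₀def
    have hA₀sym : A₀ᵀ = A₀ := by
      rw [hA₀def, Matrix.transpose_mul, Matrix.transpose_mul, Matrix.transpose_transpose,
        hAsym, ← Matrix.mul_assoc]
    have hA₀rel : ∀ k l : Fin n, A₀ l k = A₀ k l := by
      intro k l
      have h' := congrFun (congrFun hA₀sym k) l
      simpa using h'
    have hA₀supp : ∀ k l : Fin n, A₀ k l ≠ 0 → (k : ℕ) < u ∧ (l : ℕ) < u := by
      intro k l hne
      constructor
      · by_contra hc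
        exact hne (gInv_mul_support b U hrepr A g'ᵀ hAcol k l (by omega))
      · by_contra hc
        have h0 : A₀ l k = 0 := gInv_mul_support b U hrepr A g'ᵀ hAcol l k (by omega)
        rw [hA₀rel k l] at h0
        exact hne h0
    have hAeq : A = g * A₀ * gᵀ := by
      rw [hA₀def]
      calc A = (g * g') * A * (g'ᵀ * gᵀ) := by rw [hgg', hgtg, Matrix.one_mul, Matrix.mul_one]
        _ = g * (g' * A * g'ᵀ) * gᵀ := by simp only [Matrix.mul_assoc]
    have hABeq : A * Bᵀ = g * ((A₀ * W) * g') := by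
      rw [hBsym, hAeq, hBdef]
      simp only [Matrix.mul_assoc]
      rw [show gᵀ * (g'ᵀ * (W * g')) = W * g' by
        rw [← Matrix.mul_assoc, hgtg', Matrix.one_mul]]
    rw [hABeq, Matrix.trace_mul_comm, Matrix.mul_assoc, hg'g, Matrix.mul_one]
    have htr : Matrix.trace (A₀ * W) = ∑ i, ∑ j, A₀ i j * W j i := by
      rw [Matrix.trace]
      refine Finset.sum_congr rfl fun i _ => ?_
      rw [Matrix.diag_apply, Matrix.mul_apply]
    rw [htr]
    refine Finset.sum_eq_zero fun i _ => Finset.sum_eq_zero fun j _ => ?_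
    by_cases hz : A₀ i j = 0
    · rw [hz, zero_mul]
    · obtain ⟨hi, hj⟩ := hA₀supp _ _ hz
      have hW0 : W j i = 0 := Wsym_block hm hum j i hj hi
      rw [hW0, mul_zero]
  · have hg'unit : IsUnit g'.det :=
      IsUnit.of_mul_eq_one (a := g'.det) g.det (by rw [← Matrix.det_mul, hg'g, Matrix.det_one])
    have hg'tunit : IsUnit g'ᵀ.det := by rwa [Matrix.det_transpose]
    rw [hBdef, Matrix.rank_mul_eq_left_of_isUnit_det g' (g'ᵀ * W) hg'unit,
      Matrix.rank_mul_eq_right_of_isUnit_det g'ᵀ W hg'tunit]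
    exact Wsym_rank hm

theorem dualHer_witness (σ : L ≃+* L) (hinv : ∀ x, σ (σ x) = x)
    (hm : 2 * m ≤ n) (hum : u ≤ m)
    (U : Submodule L (Fin n → L)) (b : Basis (Fin n) L (Fin n → L))
    (hrepr : ∀ w ∈ U, ∀ i : Fin n, u ≤ (i : ℕ) → b.repr w i = 0) :
    ∃ B ∈ dualHer σ U, B.rank = n := by
  classical
  have hcoe : ⇑σ = ⇑(σ : L →+* L) := rfl
  set g := gMat b with hgdef
  set g' := gInv b with hg'def
  have hgg' : g * g' = 1 := gMat_mul_gInv b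
  have hg'g : g' * g = 1 := gInv_mul_gMat b
  have hgtg : g'ᵀ * gᵀ = 1 := by rw [← Matrix.transpose_mul, hgg', Matrix.transpose_one]
  have hgtg' : gᵀ * g'ᵀ = 1 := by rw [← Matrix.transpose_mul, hg'g, Matrix.transpose_one]
  have hmapone : ∀ (X Y : Matrix (Fin n) (Fin n) L), X * Y = 1 →
      (X.map (σ : L →+* L)) * (Y.map (σ : L →+* L)) = 1 := by
    intro X Y hXY
    rw [← Matrix.map_mul, hXY]
    exact Matrix.map_one _ (map_zero _) (map_one _)
  set W := Wsym L hm with hWdef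
  set B := g'ᵀ * W * (g'.map (σ : L →+* L)) with hBdef
  have hWher : (W.map σ)ᵀ = W := by
    rw [hWdef, Wsym_map hm σ, Wsym_symm hm]
  have hBher : (B.map σ)ᵀ = B := by
    have hshape : B = g'ᵀ * W * ((g'ᵀ).map (σ : L →+* L))ᵀ := by
      rw [hBdef, ← Matrix.transpose_map, Matrix.transpose_transpose]
    rw [hshape]
    exact her_congr σ hinv g'ᵀ W hWher
  refine ⟨B, ⟨hBher, ?_⟩, ?_⟩
  · rintro A ⟨hAher, hAcol⟩
    set A₀ := g' * A * ((g'.map (σ : L →+* L))ᵀ) with hA₀def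
    have hA₀her : (A₀.map σ)ᵀ = A₀ := her_congr σ hinv g' A hAher
    have hA₀rel : ∀ k l : Fin n, A₀ k l = σ (A₀ l k) := by
      intro k l
      have h' := congrFun (congrFun hA₀her k) l
      simpa using h'.symm
    have hA₀supp : ∀ k l : Fin n, A₀ k l ≠ 0 → (k : ℕ) < u ∧ (l : ℕ) < u := by
      intro k l hne
      constructor
      · by_contra hc
        exact hne (gInv_mul_support b U hrepr A _ hAcol k l (by omega))
      · by_contra hc
        have h0 : A₀ l k = 0 := gInv_mul_support b U hrepr A _ hAcol l k (by omega)
        rw [hA₀rel k l, h0, map_zero] at hne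
        exact hne rfl
    have hAeq : A = g * A₀ * ((g.map (σ : L →+* L))ᵀ) := by
      have h1 : (g'.map (σ : L →+* L))ᵀ * (g.map (σ : L →+* L))ᵀ = 1 := by
        rw [← Matrix.transpose_mul, hmapone g g' hgg', Matrix.transpose_one]
      rw [hA₀def]
      calc A = (g * g') * A * ((g'.map (σ : L →+* L))ᵀ * (g.map (σ : L →+* L))ᵀ) := by
            rw [hgg', h1, Matrix.one_mul, Matrix.mul_one]
        _ = g * (g' * A * (g'.map (σ : L →+* L))ᵀ) * (g.map (σ : L →+* L))ᵀ := by
            simp only [Matrix.mul_assoc]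
    have hABeq : A * Bᵀ = g * ((A₀ * Wᵀ) * g') := by
      have hBt : Bᵀ = (g'.map (σ : L →+* L))ᵀ * Wᵀ * g' := by
        rw [hBdef, Matrix.transpose_mul, Matrix.transpose_mul, Matrix.transpose_transpose,
          ← Matrix.mul_assoc]
      have h2 : (g.map (σ : L →+* L))ᵀ * (g'.map (σ : L →+* L))ᵀ = 1 := by
        rw [← Matrix.transpose_mul, hmapone g' g hg'g, Matrix.transpose_one]
      rw [hAeq, hBt]
      simp only [Matrix.mul_assoc]
      rw [show (g.map (σ : L →+* L))ᵀ * ((g'.map (σ : L →+* L))ᵀ * (Wᵀ * g')) = Wᵀ * g' by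
        rw [← Matrix.mul_assoc, h2, Matrix.one_mul]]
    rw [hABeq, Matrix.trace_mul_comm, Matrix.mul_assoc, hg'g, Matrix.mul_one]
    have htr : Matrix.trace (A₀ * Wᵀ) = ∑ i, ∑ j, A₀ i j * W i j := by
      rw [Matrix.trace]
      refine Finset.sum_congr rfl fun i _ => ?_
      rw [Matrix.diag_apply, Matrix.mul_apply]
      exact Finset.sum_congr rfl fun j _ => by rw [Matrix.transpose_apply]
    rw [htr]
    refine Finset.sum_eq_zero fun i _ => Finset.sum_eq_zero fun j _ => ?_
    by_cases hz : A₀ i j = 0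
    · rw [hz, zero_mul]
    · obtain ⟨hi, hj⟩ := hA₀supp _ _ hz
      have hW0 : W i j = 0 := Wsym_block hm hum i j hi hj
      rw [hW0, mul_zero]
  · have hg'unit : IsUnit g'.det :=
      IsUnit.of_mul_eq_one (a := g'.det) g.det (by rw [← Matrix.det_mul, hg'g, Matrix.det_one])
    have hg'tunit : IsUnit g'ᵀ.det := by rwa [Matrix.det_transpose]
    have hmapunit : IsUnit (g'.map (σ : L →+* L)).det :=
      IsUnit.of_mul_eq_one (g.map (σ : L →+* L)).det
        (by rw [← Matrix.det_mul, hmapone g' g hg'g, Matrix.det_one])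
    rw [hBdef, Matrix.rank_mul_eq_left_of_isUnit_det _ (g'ᵀ * W) hmapunit,
      Matrix.rank_mul_eq_right_of_isUnit_det g'ᵀ W hg'tunit]
    exact Wsym_rank hm

end WitnessLemmas


/-- If `u ≤ ⌊n/2⌋`, the maximum rank of a matrix in `X_{n,q}(U)*` equals the maximum
rank attained in `X_{n,q}`: in particular `n` for `Sym` and `Her`, and `2⌊n/2⌋` for
`Alt`. -/
theorem maxrk_dual_anticode_small_u
    {F K : Type*} [Field F] [Fintype F] [Field K] [Fintype K]
    {q n u : ℕ} (hF : Fintype.card F = q) (hK : Fintype.card K = q ^ 2)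
    (σ : K ≃+* K) (hσ : ∀ x : K, σ x = x ^ q)
    (hun : u ≤ n / 2)
    (U : Submodule F (Fin n → F)) (hU : finrank F U = u)
    (UK : Submodule K (Fin n → K)) (hUK : finrank K UK = u) :
    (maxrk (dualAlt U) = maxrk (altSet F n) ∧ maxrk (altSet F n) = 2 * (n / 2)) ∧
    (maxrk (dualSym U) = maxrk (symSet F n) ∧ maxrk (symSet F n) = n) ∧
    (maxrk (dualHer σ UK) = maxrk (herSet K n σ) ∧ maxrk (herSet K n σ) = n) := by
  classical
  have hm2 : 2 * (n / 2) ≤ n := by omega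
  have hun' : u ≤ n := by omega
  obtain ⟨b, hbU, hbrepr⟩ := exists_good_basis U hU hun'
  obtain ⟨bK, hbUK, hbreprK⟩ := exists_good_basis UK hUK hun'
  have hinv : ∀ x : K, σ (σ x) = x := by
    intro x
    rw [hσ, hσ, ← pow_mul]
    have hqq : q * q = Fintype.card K := by rw [hK]; ring
    rw [hqq]
    exact FiniteField.pow_card x
  obtain ⟨Ba, hBa, hBarank⟩ := dualAlt_witness hm2 hun U b hbrepr
  obtain ⟨Bs, hBs, hBsrank⟩ := dualSym_witness hm2 hun U b hbrepr
  obtain ⟨Bh, hBh, hBhrank⟩ := dualHer_witness σ hinv hm2 hun UK bK hbreprK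
  have hubAlt : ∀ M : Matrix (Fin n) (Fin n) F, M ∈ altSet F n → M.rank ≤ 2 * (n / 2) := by
    rintro M ⟨hMt, hMd⟩
    by_cases h2 : 2 ∣ n
    · have h3 : M.rank ≤ n := (Matrix.rank_le_card_width M).trans (Fintype.card_fin n).le
      omega
    · have hdet := det_eq_zero_of_alt_odd h2 M hMt hMd
      have h4 := rank_le_of_det_eq_zero hdet (by omega)
      omega
  have hubF : ∀ M : Matrix (Fin n) (Fin n) F, M.rank ≤ n :=
    fun M => (Matrix.rank_le_card_width M).trans (Fintype.card_fin n).le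
  have hubK : ∀ M : Matrix (Fin n) (Fin n) K, M.rank ≤ n :=
    fun M => (Matrix.rank_le_card_width M).trans (Fintype.card_fin n).le
  have hBane : 2 * (n / 2) ≠ 0 → Ba ≠ 0 := by
    intro hne hzero
    rw [hzero, Matrix.rank_zero] at hBarank
    omega
  have hBsne : n ≠ 0 → Bs ≠ 0 := by
    intro hne hzero
    rw [hzero, Matrix.rank_zero] at hBsrank
    omega
  have hBhne : n ≠ 0 → Bh ≠ 0 := by
    intro hne hzero
    rw [hzero, Matrix.rank_zero] at hBhrank
    omega
  have emaxAlt : maxrk (altSet F n) = 2 * (n / 2) := by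
    rw [maxrk]
    apply sSup_rank_eq
    · rintro r ⟨M, hM, hM0, rfl⟩
      exact hubAlt M hM
    · by_cases h0 : 2 * (n / 2) = 0
      · right; exact h0
      · exact Or.inl ⟨Ba, hBa.1, hBane h0, hBarank⟩
  have emaxDualAlt : maxrk (dualAlt U) = 2 * (n / 2) := by
    rw [maxrk]
    apply sSup_rank_eq
    · rintro r ⟨M, hM, hM0, rfl⟩
      exact hubAlt M hM.1
    · by_cases h0 : 2 * (n / 2) = 0
      · right; exact h0
      · exact Or.inl ⟨Ba, hBa, hBane h0, hBarank⟩
  have emaxSym : maxrk (symSet F n) = n := by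
    rw [maxrk]
    apply sSup_rank_eq
    · rintro r ⟨M, hM, hM0, rfl⟩
      exact hubF M
    · by_cases h0 : n = 0
      · right; exact h0
      · exact Or.inl ⟨Bs, hBs.1, hBsne h0, hBsrank⟩
  have emaxDualSym : maxrk (dualSym U) = n := by
    rw [maxrk]
    apply sSup_rank_eq
    · rintro r ⟨M, hM, hM0, rfl⟩
      exact hubF M
    · by_cases h0 : n = 0
      · right; exact h0
      · exact Or.inl ⟨Bs, hBs, hBsne h0, hBsrank⟩
  have emaxHer : maxrk (herSet K n σ) = n := by
    rw [maxrk]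
    apply sSup_rank_eq
    · rintro r ⟨M, hM, hM0, rfl⟩
      exact hubK M
    · by_cases h0 : n = 0
      · right; exact h0
      · exact Or.inl ⟨Bh, hBh.1, hBhne h0, hBhrank⟩
  have emaxDualHer : maxrk (dualHer σ UK) = n := by
    rw [maxrk]
    apply sSup_rank_eq
    · rintro r ⟨M, hM, hM0, rfl⟩
      exact hubK M
    · by_cases h0 : n = 0
      · right; exact h0
      · exact Or.inl ⟨Bh, hBh, hBhne h0, hBhrank⟩
  exact ⟨⟨by rw [emaxDualAlt, emaxAlt], emaxAlt⟩,
    ⟨by rw [emaxDualSym, emaxSym], emaxSym⟩,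
    ⟨by rw [emaxDualHer, emaxHer], emaxHer⟩⟩
end

section
/- Let C ⊆ Alt_{n,q} be an F_q-linear code (alternating matrices) with d_rk(C) = n, n even. Then dim_{F_q} C ≤ n/2. -/
open Matrix Module MvPolynomial



universe u

private theorem det_alt_isSquare :
    ∀ (n : ℕ) {L : Type u} [Field L] (A : Matrix (Fin n) (Fin n) L),
      (∀ r c, A c r = -(A r c)) → (∀ i, A i i = 0) → ∃ g : L, A.det = g ^ 2 := by
  intro n
  induction n using Nat.strong_induction_on with
  | _ n IH =>
  intro L _ A hskew hdiag
  by_cases hA : A = 0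
  · rcases isEmpty_or_nonempty (Fin n) with h | h
    · exact ⟨1, by simp [Matrix.det_isEmpty]⟩
    · exact ⟨0, by rw [hA, Matrix.det_zero]; ring⟩
  · have hex : ∃ i j, A i j ≠ 0 := by
      by_contra h
      push_neg at h
      exact hA (by ext i j; simpa using h i j)
    obtain ⟨i, j, ha⟩ := hex
    have hij : i ≠ j := by rintro rfl; exact ha (hdiag i)
    have h2 : 2 ≤ n := by
      by_contra hlt
      push_neg at hlt
      interval_cases n
      · exact i.elim0
      · exact hij (Subsingleton.elim i j)
    obtain ⟨m, rfl⟩ : ∃ m, n = m + 2 := ⟨n - 2, by omega⟩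
    classical
    let e₁ : Fin 2 ⊕ Fin m ≃ Fin (m + 2) :=
      finSumFinEquiv.trans (finCongr (by omega))
    set a₀ := e₁ (Sum.inl 0) with ha₀
    set b₀ := e₁ (Sum.inl 1) with hb₀
    have hab : a₀ ≠ b₀ := e₁.injective.ne (by simp)
    set σ₁ : Equiv.Perm (Fin (m + 2)) := Equiv.swap a₀ i with hσ₁
    have hσa : σ₁ a₀ = i := Equiv.swap_apply_left _ _
    have hb₁i : σ₁ b₀ ≠ i := by
      intro h
      exact hab (σ₁.injective (h.trans hσa.symm)).symm
    set τ : Equiv.Perm (Fin (m + 2)) :=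
      if σ₁ b₀ = j then σ₁ else σ₁.trans (Equiv.swap (σ₁ b₀) j) with hτ
    have hτa : τ a₀ = i := by
      rw [hτ]
      split_ifs with h
      · exact hσa
      · simp only [Equiv.trans_apply, hσa]
        exact Equiv.swap_apply_of_ne_of_ne (Ne.symm hb₁i) hij
    have hτb : τ b₀ = j := by
      rw [hτ]
      split_ifs with h
      · exact h
      · simp only [Equiv.trans_apply]
        exact Equiv.swap_apply_left _ _
    set e : Fin 2 ⊕ Fin m ≃ Fin (m + 2) := e₁.trans τ with he
    have hei : e (Sum.inl 0) = i := hτa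
    have hej : e (Sum.inl 1) = j := hτb
    set B := A.submatrix e e with hB
    have hdetB : B.det = A.det := Matrix.det_submatrix_equiv_self e A
    have hBskew : ∀ r c, B c r = -(B r c) := fun r c => hskew _ _
    have hBdiag : ∀ r, B r r = 0 := fun r => hdiag _
    set P := B.toBlocks₁₁ with hP
    set Q := B.toBlocks₁₂ with hQdef
    set Rm := B.toBlocks₂₁ with hRm
    set S := B.toBlocks₂₂ with hS
    have hP01 : P 0 1 = A i j := by
      show B (Sum.inl 0) (Sum.inl 1) = A i j
      rw [hB, Matrix.submatrix_apply, hei, hej]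
    have hP10 : P 1 0 = -(A i j) := by
      show B (Sum.inl 1) (Sum.inl 0) = _
      rw [hBskew]
      show -(P 0 1) = _
      rw [hP01]
    have hP00 : P 0 0 = 0 := hBdiag _
    have hP11 : P 1 1 = 0 := hBdiag _
    set a := A i j with haa
    set Pinv : Matrix (Fin 2) (Fin 2) L := !![0, -a⁻¹; a⁻¹, 0] with hPinv
    have hmul1 : Pinv * P = 1 := by
      ext r c
      fin_cases r <;> fin_cases c <;>
        simp [Matrix.mul_apply, Fin.sum_univ_two, hPinv, hP00, hP01, hP10, hP11,
          Matrix.one_apply, inv_mul_cancel₀ ha, mul_inv_cancel₀ ha]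
    have hmul2 : P * Pinv = 1 := by
      ext r c
      fin_cases r <;> fin_cases c <;>
        simp [Matrix.mul_apply, Fin.sum_univ_two, hPinv, hP00, hP01, hP10, hP11,
          Matrix.one_apply, inv_mul_cancel₀ ha, mul_inv_cancel₀ ha]
    haveI iP : Invertible P := ⟨Pinv, hmul1, hmul2⟩
    have hinvP : ⅟P = Pinv := invOf_eq_right_inv hmul2
    have hdetP : P.det = a ^ 2 := by
      rw [Matrix.det_fin_two, hP00, hP01, hP10, hP11]; ring
    have hQ : ∀ t l, Q t l = -(Rm l t) := by
      intro t l
      show B (Sum.inl t) (Sum.inr l) = -(B (Sum.inr l) (Sum.inl t))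
      rw [hBskew (Sum.inl t) (Sum.inr l), neg_neg]
    have hRPQ : ∀ k l, (Rm * Pinv * Q) k l
        = a⁻¹ * (Rm k 0 * Rm l 1 - Rm k 1 * Rm l 0) := by
      intro k l
      simp only [Matrix.mul_apply, Fin.sum_univ_two, hPinv, hQ]
      simp [Matrix.cons_val_zero, Matrix.cons_val_one]
      ring
    set T := S - Rm * Pinv * Q with hT
    have hSskew : ∀ r c, S c r = -(S r c) := fun r c => hBskew (Sum.inr r) (Sum.inr c)
    have hTskew : ∀ r c, T c r = -(T r c) := by
      intro r c
      simp only [hT, Matrix.sub_apply]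
      rw [hRPQ, hRPQ, hSskew]
      ring
    have hTdiag : ∀ k, T k k = 0 := by
      intro k
      simp only [hT, Matrix.sub_apply]
      rw [hRPQ]
      have : S k k = 0 := hBdiag _
      rw [this]
      ring
    obtain ⟨g, hg⟩ := IH m (by omega) T hTskew hTdiag
    refine ⟨a * g, ?_⟩
    have hblock : B = Matrix.fromBlocks P Q Rm S := (Matrix.fromBlocks_toBlocks B).symm
    have := Matrix.det_fromBlocks₁₁ P Q Rm S
    rw [← hdetB, hblock, this, hinvP, ← hT, hdetP, hg]
    ring


private theorem degree_add_aux {k : ℕ} (a b : Fin k →₀ ℕ) :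
    (a + b).degree = a.degree + b.degree := by
  simp [Finsupp.degree_eq_weight_one, map_add]

private theorem sq_homogeneous_totalDegree
    {k n : ℕ} {F : Type*} [Field F] {g d : MvPolynomial (Fin k) F}
    (hgd : g * g = d) (hd : d.IsHomogeneous n) (hd0 : d ≠ 0) :
    2 * g.totalDegree = n := by
  classical
  have hg0 : g ≠ 0 := by rintro rfl; rw [mul_zero] at hgd; exact hd0 hgd.symm
  set D := g.totalDegree with hD
  set top := homogeneousComponent D g with htop
  have hdeg_eq : ∀ s : Fin k →₀ ℕ, (s.sum fun _ e => e) = s.degree := fun _ => rfl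
  have htop0 : top ≠ 0 := by
    obtain ⟨s, hsmem, hsup⟩ :=
      Finset.exists_mem_eq_sup g.support (MvPolynomial.support_nonempty.mpr hg0)
        (fun s => s.sum fun _ e => e)
    intro h
    have hsd : s.degree = D := by rw [hD, MvPolynomial.totalDegree, hsup, hdeg_eq]
    have : coeff s top ≠ 0 := by
      rw [htop, coeff_homogeneousComponent, if_pos hsd]
      exact MvPolynomial.mem_support_iff.mp hsmem
    exact this (by rw [h, MvPolynomial.coeff_zero])
  have htop2 : top * top ≠ 0 := mul_ne_zero htop0 htop0
  obtain ⟨μ, hμ⟩ := MvPolynomial.exists_coeff_ne_zero htop2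
  have hhomtop : (top * top).IsHomogeneous (D + D) :=
    (homogeneousComponent_isHomogeneous D g).mul (homogeneousComponent_isHomogeneous D g)
  have hμdeg : μ.degree = D + D := by
    by_contra h
    exact hμ (hhomtop.coeff_eq_zero h)
  have key : coeff μ (g * g) = coeff μ (top * top) := by
    rw [MvPolynomial.coeff_mul, MvPolynomial.coeff_mul]
    apply Finset.sum_congr rfl
    intro p hp
    rw [Finset.HasAntidiagonal.mem_antidiagonal] at hp
    have hsum : p.1.degree + p.2.degree = D + D := by
      rw [← degree_add_aux, hp, hμdeg]
    by_cases h1 : p.1.degree = D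
    · have h2 : p.2.degree = D := by omega
      rw [htop, coeff_homogeneousComponent, coeff_homogeneousComponent,
        if_pos h1, if_pos h2]
    · rcases Nat.lt_or_ge p.1.degree D with hlt | hge
      · have h2 : D < p.2.degree := by omega
        have : coeff p.2 g = 0 := by
          apply MvPolynomial.coeff_eq_zero_of_totalDegree_lt
          exact h2
        rw [this, mul_zero]
        rw [htop, coeff_homogeneousComponent, coeff_homogeneousComponent]
        have h2' : ¬ p.2.degree = D := by omega
        rw [if_neg h2', mul_zero]
      · have h1' : D < p.1.degree := lt_of_le_of_ne hge (fun h => h1 h.symm)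
        have : coeff p.1 g = 0 := by
          apply MvPolynomial.coeff_eq_zero_of_totalDegree_lt
          exact h1'
        rw [this, zero_mul]
        rw [htop, coeff_homogeneousComponent, coeff_homogeneousComponent, if_neg h1, zero_mul]
  have hcoeffd : coeff μ d ≠ 0 := by rw [← hgd, key]; exact hμ
  have : μ.degree = n := by
    by_contra h
    exact hcoeffd (hd.coeff_eq_zero h)
  omega


set_option maxHeartbeats 1000000 in
set_option synthInstance.maxHeartbeats 1000000 in
/-- An `F_q`-linear alternating code of minimum rank distance `n` (with `n` even)
has dimension at most `n/2`. -/
theorem alt_full_distance_dim_bound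
    {F : Type*} [Field F] [Fintype F] {n : ℕ} (hn : Even n)
    (C : Submodule F (Matrix (Fin n) (Fin n) F))
    (halt : ∀ M ∈ C, Mᵀ = -M ∧ ∀ i, M i i = 0)
    (hmin : ∀ M ∈ C, M ≠ 0 → M.rank = n)
    (hne : ∃ M ∈ C, M ≠ 0) :
    finrank F ↥C ≤ n / 2 := by
  classical
  by_contra hklt
  push_neg at hklt
  obtain ⟨M₀, hM₀C, hM₀⟩ := hne
  have hn1 : 0 < n := by
    rcases Nat.eq_zero_or_pos n with h | h
    · subst h
      exact absurd (show M₀ = 0 by ext i j; exact i.elim0) hM₀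
    · exact h
  haveI : Nonempty (Fin n) := ⟨⟨0, hn1⟩⟩
  -- nonzero elements of C have nonzero determinant
  have hdet : ∀ M : Matrix (Fin n) (Fin n) F, M ∈ C → M ≠ 0 → M.det ≠ 0 := by
    intro M hMC hM0
    have hr : M.rank = n := hmin M hMC hM0
    have htop : LinearMap.range M.mulVecLin = ⊤ := by
      apply Submodule.eq_top_of_finrank_eq
      rw [Module.finrank_fintype_fun_eq_card, Fintype.card_fin]
      exact hr
    have hsurj : Function.Surjective M.mulVec := by
      intro y
      obtain ⟨x, hx⟩ := LinearMap.range_eq_top.mp htop y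
      exact ⟨x, hx⟩
    have hU : IsUnit M := Matrix.mulVec_surjective_iff_isUnit.mp hsurj
    exact ((Matrix.isUnit_iff_isUnit_det M).mp hU).ne_zero
  set k := finrank F ↥C with hkdef
  let b : Basis (Fin k) F ↥C := finBasis F ↥C
  let R := MvPolynomial (Fin k) F
  let MM : Matrix (Fin n) (Fin n) R :=
    Matrix.of fun r c => ∑ i, MvPolynomial.C ((b i : Matrix (Fin n) (Fin n) F) r c) * X i
  have hbskew : ∀ (i : Fin k) (r c : Fin n),
      (b i : Matrix (Fin n) (Fin n) F) c r = -((b i : Matrix (Fin n) (Fin n) F) r c) := by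
    intro i r c
    have h := (halt _ (b i).2).1
    have := congrFun (congrFun h r) c
    simpa using this
  have hMMskew : ∀ r c, MM c r = -(MM r c) := by
    intro r c
    show (∑ i, MvPolynomial.C ((b i : Matrix (Fin n) (Fin n) F) c r) * X i) = _
    have hterm : ∀ i : Fin k,
        MvPolynomial.C ((b i : Matrix (Fin n) (Fin n) F) c r) * X i
          = -(MvPolynomial.C ((b i : Matrix (Fin n) (Fin n) F) r c) * X i) := by
      intro i
      rw [hbskew i r c, map_neg, neg_mul]
    rw [Finset.sum_congr rfl fun i _ => hterm i, Finset.sum_neg_distrib]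
    rfl
  have hMMdiag : ∀ r, MM r r = 0 := by
    intro r
    show (∑ i, MvPolynomial.C ((b i : Matrix (Fin n) (Fin n) F) r r) * X i) = 0
    apply Finset.sum_eq_zero
    intro i _
    rw [(halt _ (b i).2).2 r, map_zero, zero_mul]
  set d : R := MM.det with hd
  have heval : ∀ x : Fin k → F,
      eval x d = (∑ i, x i • (b i : Matrix (Fin n) (Fin n) F)).det := by
    intro x
    rw [hd, RingHom.map_det]
    congr 1
    ext r c
    simp [MM, Matrix.map_apply, Matrix.sum_apply, Matrix.smul_apply, smul_eq_mul, mul_comm]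
  have hdhom : d.IsHomogeneous n := by
    rw [hd, Matrix.det_apply]
    apply IsHomogeneous.sum
    intro σ _
    have hentry : ∀ i : Fin n, (MM (σ i) i).IsHomogeneous 1 := by
      intro i
      show (∑ j, MvPolynomial.C ((b j : Matrix (Fin n) (Fin n) F) (σ i) i) * X j).IsHomogeneous 1
      apply IsHomogeneous.sum
      intro j _
      exact isHomogeneous_C_mul_X _ _
    have hprod : (∏ i, MM (σ i) i).IsHomogeneous n := by
      have := IsHomogeneous.prod Finset.univ (fun i => MM (σ i) i) (fun _ => 1)
        (fun i _ => hentry i)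
      simpa using this
    rcases Int.units_eq_one_or (Equiv.Perm.sign σ) with h | h <;> rw [h]
    · simpa using hprod
    · simpa [Units.smul_def] using hprod.neg
  -- membership and injectivity of the parametrization
  have hmem : ∀ x : Fin k → F, (∑ i, x i • (b i : Matrix (Fin n) (Fin n) F)) ∈ C := by
    intro x
    exact Submodule.sum_mem _ fun i _ => Submodule.smul_mem _ _ (b i).2
  have hzero : ∀ x : Fin k → F,
      (∑ i, x i • (b i : Matrix (Fin n) (Fin n) F)) = 0 → x = 0 := by
    intro x hx
    have hsum : (∑ i, x i • b i) = (0 : ↥C) := by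
      apply Subtype.ext
      simpa using hx
    have hli := b.linearIndependent
    rw [Fintype.linearIndependent_iff] at hli
    funext i
    exact hli x hsum i
  -- d is nonzero
  let x₀ : Fin k → F := fun i => b.repr ⟨M₀, hM₀C⟩ i
  have hMx₀ : (∑ i, x₀ i • (b i : Matrix (Fin n) (Fin n) F)) = M₀ := by
    have h := congrArg Subtype.val (b.sum_repr ⟨M₀, hM₀C⟩)
    rw [Submodule.coe_sum] at h
    simpa only [Submodule.coe_smul] using h
  have hd0 : d ≠ 0 := by
    intro h
    have h1 := heval x₀
    rw [h, map_zero, hMx₀] at h1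
    exact hdet M₀ hM₀C hM₀ h1.symm
  -- the determinant is a square of a polynomial
  let L := FractionRing R
  let AL := MM.map (algebraMap R L)
  obtain ⟨r, hr⟩ := det_alt_isSquare n AL
    (fun r c => by
      show algebraMap R L (MM c r) = -(algebraMap R L (MM r c))
      rw [hMMskew r c, map_neg])
    (fun i => by
      show algebraMap R L (MM i i) = 0
      rw [hMMdiag i, map_zero])
  have hrd : algebraMap R L d = r ^ 2 := by
    rw [hd, RingHom.map_det]
    exact hr
  have hint : IsIntegral R r := by
    refine ⟨Polynomial.X ^ 2 - Polynomial.C d, Polynomial.monic_X_pow_sub_C d two_ne_zero, ?_⟩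
    simp [hrd.symm]
  obtain ⟨g, hgr⟩ := IsIntegrallyClosed.isIntegral_iff.mp hint
  have hg2 : g * g = d := by
    apply IsFractionRing.injective R L
    rw [_root_.map_mul, hgr, hrd, sq]
  have hdeg2 : 2 * g.totalDegree = n := sq_homogeneous_totalDegree hg2 hdhom hd0
  -- Chevalley–Warning
  set p := ringChar F with hp
  haveI : CharP F p := ringChar.charP F
  have hdvd := char_dvd_card_solutions (K := F) (σ := Fin k) p
    (f := g) (by rw [Fintype.card_fin]; omega)
  have hcard : Fintype.card {x : Fin k → F // eval x g = 0} = 1 := by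
    rw [Fintype.card_eq_one_iff]
    have hz : eval (0 : Fin k → F) g = 0 := by
      have h2 : eval (0 : Fin k → F) g * eval (0 : Fin k → F) g = eval 0 d := by
        rw [← _root_.map_mul, hg2]
      rw [heval 0] at h2
      have hzmat : (∑ i, (0 : Fin k → F) i • (b i : Matrix (Fin n) (Fin n) F)) = 0 := by
        simp
      rw [hzmat, Matrix.det_zero] at h2
      exact mul_self_eq_zero.mp h2
    refine ⟨⟨0, hz⟩, ?_⟩
    rintro ⟨y, hy⟩
    apply Subtype.ext
    show y = 0
    have hyd : eval y d = 0 := by rw [← hg2, _root_.map_mul, hy, mul_zero]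
    rw [heval y] at hyd
    by_contra hy0
    have hMy : (∑ i, y i • (b i : Matrix (Fin n) (Fin n) F)) ≠ 0 := by
      intro h
      exact hy0 (hzero y h)
    exact hdet _ (hmem y) hMy hyd
  rw [hcard] at hdvd
  exact CharP.char_ne_one F p (Nat.dvd_one.mp hdvd)
end
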